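/- The drift expression B(n,v,ℓ) := ∑_{i=⌈ℓ/2⌉}^{ℓ} C(n-v,i)·C(v,ℓ-i)·(2i-ℓ)/C(n,ℓ) equals the expected value of max{OneMax(y) - v, 0}, where y is obtained from a string x with exactly v ones by flipping exactly ℓ uniformly random distinct positions. -/

import Mathlib

open Finset

/-- `OneMax` of a bit string: the number of ones. -/
def oneMax {n : ℕ} (x : Fin n → Bool) : ℕ := (Finset.univ.filter fun i => x i = true).card

/-- Flip the bits of `x` in the positions of `S`. -/
def flipSet {n : ℕ} (x : Fin n → Bool) (S : Finset (Fin n)) : Fin n → Bool :=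
  fun i => if i ∈ S then !(x i) else x i

/-- The drift expression `B(n,v,ℓ) = ∑_{i=⌈ℓ/2⌉}^{ℓ} C(n-v,i)C(v,ℓ-i)(2i-ℓ)/C(n,ℓ)`
equals the expected value of `max{OneMax(y) - v, 0}` where `y` is obtained from a
string `x` with exactly `v` ones by flipping a uniformly random set of `ℓ` distinct
positions. -/
theorem drift_maximizer_formula (n v ℓ : ℕ) (hn : 1 ≤ n) (hv : v ≤ n)
    (hℓ : 1 ≤ ℓ) (hℓn : ℓ ≤ n) (x : Fin n → Bool) (hx : oneMax x = v) :
    ((n.choose ℓ : ℝ))⁻¹ *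
        ∑ S ∈ Finset.powersetCard ℓ (Finset.univ : Finset (Fin n)),
          (max ((oneMax (flipSet x S) : ℤ) - v) 0 : ℤ) =
      ∑ i ∈ Finset.Icc ((ℓ + 1) / 2) ℓ,
        ((n - v).choose i : ℝ) * (v.choose (ℓ - i) : ℝ) * (2 * (i : ℝ) - ℓ) /
          (n.choose ℓ : ℝ) := by
  classical
  set O : Finset (Fin n) := univ.filter (fun i => x i = true) with hO
  set Z : Finset (Fin n) := univ.filter (fun i => x i = false) with hZ
  have hOcard : O.card = v := hx
  have hZO : Z = Oᶜ := by ext i; simp [hZ, hO]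
  have hZcard : Z.card = n - v := by
    rw [hZO, card_compl, hOcard, Fintype.card_fin]
  have hZOdisj : Disjoint Z O := by rw [hZO]; exact disjoint_compl_left
  have hZOunion : Z ∪ O = univ := by
    ext i; by_cases h : x i <;> simp [hZ, hO, h]
  have hsplit : ∀ S : Finset (Fin n), S.card = ℓ → (S ∩ Z).card + (S ∩ O).card = ℓ := by
    intro S hScard
    rw [← card_union_of_disjoint (hZOdisj.mono inter_subset_right inter_subset_right),
      ← inter_union_distrib_left, hZOunion, inter_univ, hScard]
  -- key per-S computation
  have key : ∀ S ∈ Finset.powersetCard ℓ (univ : Finset (Fin n)),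
      (max ((oneMax (flipSet x S) : ℤ) - v) 0 : ℤ)
        = max (2 * ((S ∩ Z).card : ℤ) - ℓ) 0 := by
    intro S hS
    rw [mem_powersetCard] at hS
    have hsp := hsplit S hS.2
    have hones : univ.filter (fun i => flipSet x S i = true) = (S ∩ Z) ∪ (O \ S) := by
      ext i
      by_cases h : i ∈ S <;> simp [flipSet, h, hZ, hO]
    have hdisj : Disjoint (S ∩ Z) (O \ S) :=
      hZOdisj.mono inter_subset_right sdiff_subset
    have hOS : (O \ S).card + (O ∩ S).card = v := by
      rw [card_sdiff_add_card_inter, hOcard]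
    rw [inter_comm O S] at hOS
    have h1 : oneMax (flipSet x S) = (S ∩ Z).card + (O \ S).card := by
      rw [oneMax, hones, card_union_of_disjoint hdisj]
    have h2 : (oneMax (flipSet x S) : ℤ) - v = 2 * ((S ∩ Z).card : ℤ) - ℓ := by
      rw [h1]; push_cast; omega
    rw [h2]
  rw [Finset.sum_congr rfl key]
  -- fiber cardinality
  have fiber : ∀ i ∈ Finset.range (ℓ + 1),
      ((Finset.powersetCard ℓ (univ : Finset (Fin n))).filter
        (fun S => (S ∩ Z).card = i)).card = (n - v).choose i * v.choose (ℓ - i) := by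
    intro i hi
    rw [mem_range] at hi
    have hiℓ : i ≤ ℓ := by omega
    have e1 : ∀ p : Finset (Fin n) × Finset (Fin n), p.1 ⊆ Z → p.2 ⊆ O →
        (p.1 ∪ p.2) ∩ Z = p.1 ∧ (p.1 ∪ p.2) ∩ O = p.2 := by
      intro p hp1 hp2
      constructor
      · rw [union_inter_distrib_right, inter_eq_left.mpr hp1,
          disjoint_iff_inter_eq_empty.mp (hZOdisj.symm.mono_left hp2), union_empty]
      · rw [union_inter_distrib_right, inter_eq_left.mpr hp2,
          disjoint_iff_inter_eq_empty.mp (hZOdisj.mono_left hp1), empty_union]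
    rw [Finset.card_nbij' (fun S => ((S ∩ Z, S ∩ O) : Finset (Fin n) × Finset (Fin n)))
        (fun p => p.1 ∪ p.2) (t := powersetCard i Z ×ˢ powersetCard (ℓ - i) O)
      ?_ ?_ ?_ ?_]
    · rw [card_product, card_powersetCard, card_powersetCard, hZcard, hOcard]
    · intro S hS
      simp only [mem_coe, mem_filter, mem_powersetCard] at hS
      obtain ⟨⟨_, hScard⟩, hSZ⟩ := hS
      have hsp := hsplit S hScard
      simp only [mem_coe, mem_product, mem_powersetCard]
      exact ⟨⟨inter_subset_right, hSZ⟩, ⟨inter_subset_right, by omega⟩⟩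
    · intro p hp
      simp only [mem_coe, mem_product, mem_powersetCard] at hp
      obtain ⟨⟨hp1, hc1⟩, hp2, hc2⟩ := hp
      have hd : Disjoint p.1 p.2 := hZOdisj.mono hp1 hp2
      simp only [mem_coe, mem_filter, mem_powersetCard]
      refine ⟨⟨subset_univ _, ?_⟩, ?_⟩
      · rw [card_union_of_disjoint hd, hc1, hc2]; omega
      · rw [(e1 p hp1 hp2).1, hc1]
    · intro S hS
      simp only [mem_coe, mem_filter, mem_powersetCard] at hS
      show (S ∩ Z) ∪ (S ∩ O) = S
      rw [← inter_union_distrib_left, hZOunion, inter_univ]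
    · intro p hp
      simp only [mem_coe, mem_product, mem_powersetCard] at hp
      obtain ⟨⟨hp1, hc1⟩, hp2, hc2⟩ := hp
      show ((p.1 ∪ p.2) ∩ Z, (p.1 ∪ p.2) ∩ O) = p
      rw [(e1 p hp1 hp2).1, (e1 p hp1 hp2).2]
  -- regroup the sum by fibers
  have regroup : ∑ S ∈ Finset.powersetCard ℓ (univ : Finset (Fin n)),
      max (2 * ((S ∩ Z).card : ℤ) - ℓ) 0
      = ∑ i ∈ Finset.range (ℓ + 1),
          (((n - v).choose i * v.choose (ℓ - i) : ℕ) : ℤ) * max (2 * (i : ℤ) - ℓ) 0 := by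
    rw [← Finset.sum_fiberwise_of_maps_to (g := fun S => (S ∩ Z).card)
      (t := Finset.range (ℓ + 1)) (fun S hS => by
        show (S ∩ Z).card ∈ Finset.range (ℓ + 1)
        rw [mem_range]
        have h1 := (mem_powersetCard.mp hS).2
        have h2 : (S ∩ Z).card ≤ ℓ := h1 ▸ card_le_card inter_subset_left
        omega)]
    refine Finset.sum_congr rfl fun i hi => ?_
    rw [Finset.sum_congr rfl (fun S hS => by rw [(mem_filter.mp hS).2]),
      Finset.sum_const, nsmul_eq_mul, fiber i hi]
  rw [regroup]
  -- now pure arithmetic over ℝ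
  push_cast
  rw [Finset.mul_sum]
  rw [show Finset.range (ℓ + 1) = Finset.Icc 0 ℓ by ext; simp]
  rw [← Finset.sum_subset (Finset.Icc_subset_Icc (Nat.zero_le _) le_rfl)
    (fun i hi hni => ?_)]
  · refine Finset.sum_congr rfl fun i hi => ?_
    rw [mem_Icc] at hi
    have h2i : ℓ ≤ 2 * i := by omega
    have hm : max (2 * (i : ℝ) - ℓ) 0 = 2 * (i : ℝ) - ℓ := by
      apply max_eq_left
      have : (ℓ : ℝ) ≤ 2 * i := by exact_mod_cast h2i
      linarith
    rw [hm]
    ring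
  · rw [mem_Icc] at hi hni
    have h2i : 2 * i ≤ ℓ := by omega
    have hm : max (2 * (i : ℝ) - ℓ) 0 = 0 := by
      apply max_eq_right
      have : (2 * i : ℝ) ≤ ℓ := by exact_mod_cast h2i
      linarith
    rw [hm]
    ring
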